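/- Let Γ₁₁ ∈ ℝ^{n_u×n_u} be symmetric, partitioned as Γ₁₁ = [[Γ₁, G],[Gᵀ, Γ₂]] with Γ₁ ∈ ℝ^{p×p}, and suppose D^{-T} Γ₁₁ = Γ₁₁ D⁻¹, where D = [[Λ₁, 0],[0, Λ₃]]. Then G = 0, i.e. Γ₁₁ = [[Γ₁, 0],[0, Γ₂]] is block diagonal, and the diagonal blocks satisfy Λ₁^{-T} Γ₁ = Γ₁ Λ₁⁻¹ and Λ₃^{-T} Γ₂ = Γ₂ Λ₃⁻¹. -/

import Mathlib

open Matrix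
open Polynomial


lemma charpoly_eval' {n : ℕ} (M : Matrix (Fin n) (Fin n) ℂ) (μ : ℂ) :
    M.charpoly.eval μ = (μ • (1 : Matrix (Fin n) (Fin n) ℂ) - M).det := by
  rw [Matrix.charpoly, eval_det, matPolyEquiv_charmatrix]
  simp [smul_one_eq_diagonal]

lemma pow_comm_aux {p m : ℕ} (A : Matrix (Fin p) (Fin p) ℂ) (B : Matrix (Fin m) (Fin m) ℂ)
    (G : Matrix (Fin p) (Fin m) ℂ) (h : A * G = G * B) (n : ℕ) :
    A ^ n * G = G * B ^ n := by
  induction n with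
  | zero => simp
  | succ k ih => rw [pow_succ, pow_succ, Matrix.mul_assoc, h, ← Matrix.mul_assoc, ih, Matrix.mul_assoc]

lemma aeval_comm_aux {p m : ℕ} (A : Matrix (Fin p) (Fin p) ℂ) (B : Matrix (Fin m) (Fin m) ℂ)
    (G : Matrix (Fin p) (Fin m) ℂ) (h : A * G = G * B) (q : ℂ[X]) :
    (aeval A q) * G = G * (aeval B q) := by
  induction q using Polynomial.induction_on' with
  | add f g hf hg => rw [map_add, map_add, Matrix.add_mul, Matrix.mul_add, hf, hg]
  | monomial n a =>
      simp only [aeval_monomial, Algebra.algebraMap_eq_smul_one, smul_mul_assoc, one_mul]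
      rw [Matrix.smul_mul, pow_comm_aux A B G h n, Matrix.mul_smul]

lemma sylvester_aux {p m : ℕ} (A : Matrix (Fin p) (Fin p) ℂ) (B : Matrix (Fin m) (Fin m) ℂ)
    (G : Matrix (Fin p) (Fin m) ℂ)
    (hAB : ∀ μ : ℂ, (μ • (1 : Matrix (Fin m) (Fin m) ℂ) - B).det = 0 →
      (A - μ • 1).det ≠ 0)
    (h : A * G = G * B) : G = 0 := by
  have hq := aeval_comm_aux A B G h B.charpoly
  rw [Matrix.aeval_self_charpoly] at hq
  rw [Matrix.mul_zero] at hq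
  -- aeval A charpoly is invertible
  have hsplit : B.charpoly = (B.charpoly.roots.map fun μ => X - C μ).prod :=
    (IsAlgClosed.splits _).eq_prod_roots_of_monic B.charpoly_monic
  have hdet : (aeval A B.charpoly).det ≠ 0 := by
    rw [hsplit, ← Multiset.prod_toList, map_list_prod, ← Matrix.coe_detMonoidHom,
      MonoidHom.map_list_prod]
    rw [Ne, List.prod_eq_zero_iff]
    simp only [List.map_map, List.mem_map, Multiset.mem_toList, Multiset.mem_map,
      Function.comp_apply]
    rintro ⟨_, ⟨μ, hμ, rfl⟩, hdet0⟩
    have hroot : B.charpoly.eval μ = 0 := isRoot_of_mem_roots hμ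
    rw [charpoly_eval'] at hroot
    apply hAB μ hroot
    simpa [Matrix.coe_detMonoidHom, Algebra.algebraMap_eq_smul_one] using hdet0
  calc G = 1 * G := (Matrix.one_mul G).symm
    _ = ((aeval A B.charpoly)⁻¹ * (aeval A B.charpoly)) * G := by
        rw [Matrix.nonsing_inv_mul _ (isUnit_iff_ne_zero.mpr hdet)]
    _ = (aeval A B.charpoly)⁻¹ * ((aeval A B.charpoly) * G) := by rw [Matrix.mul_assoc]
    _ = 0 := by rw [hq, Matrix.mul_zero]

/-- Let `Λ₁ ∈ ℝ^{p×p}` and `Λ₃ ∈ ℝ^{m×m}` (`m = n_u − p`) be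
invertible with disjoint complex spectra, `D = diag(Λ₁, Λ₃)`, and let
`Γ₁₁ = [[Γ₁, G],[Gᵀ, Γ₂]]` be symmetric with `D⁻ᵀ Γ₁₁ = Γ₁₁ D⁻¹`. Then `G = 0`
and `Λ₁⁻ᵀ Γ₁ = Γ₁ Λ₁⁻¹`, `Λ₃⁻ᵀ Γ₂ = Γ₂ Λ₃⁻¹`. -/
theorem gamma_block_diagonal (p m : ℕ)
    (Λ₁ : Matrix (Fin p) (Fin p) ℝ) (hΛ₁Unit : IsUnit Λ₁)
    (Λ₃ : Matrix (Fin m) (Fin m) ℝ) (hΛ₃Unit : IsUnit Λ₃)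
    (hdisj : ¬ ∃ μ : ℂ,
      (Λ₁.map (Complex.ofReal) - μ • 1).det = 0 ∧
      (Λ₃.map (Complex.ofReal) - μ • 1).det = 0)
    (Γ₁ : Matrix (Fin p) (Fin p) ℝ) (hΓ₁Symm : Γ₁ᵀ = Γ₁)
    (G : Matrix (Fin p) (Fin m) ℝ)
    (Γ₂ : Matrix (Fin m) (Fin m) ℝ) (hΓ₂Symm : Γ₂ᵀ = Γ₂)
    (Γ₁₁ : Matrix (Fin p ⊕ Fin m) (Fin p ⊕ Fin m) ℝ)
    (hΓ₁₁ : Γ₁₁ = fromBlocks Γ₁ G Gᵀ Γ₂)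
    (D : Matrix (Fin p ⊕ Fin m) (Fin p ⊕ Fin m) ℝ)
    (hD : D = fromBlocks Λ₁ 0 0 Λ₃)
    (hcomm : (D⁻¹)ᵀ * Γ₁₁ = Γ₁₁ * D⁻¹) :
    G = 0 ∧ (Λ₁⁻¹)ᵀ * Γ₁ = Γ₁ * Λ₁⁻¹ ∧ (Λ₃⁻¹)ᵀ * Γ₂ = Γ₂ * Λ₃⁻¹ := by
  have hdet1 : IsUnit Λ₁.det := (Matrix.isUnit_iff_isUnit_det _).mp hΛ₁Unit
  have hdet3 : IsUnit Λ₃.det := (Matrix.isUnit_iff_isUnit_det _).mp hΛ₃Unit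
  subst hΓ₁₁ hD
  have hDinv : (fromBlocks Λ₁ 0 0 Λ₃)⁻¹ = fromBlocks Λ₁⁻¹ 0 0 Λ₃⁻¹ := by
    apply Matrix.inv_eq_right_inv
    rw [Matrix.fromBlocks_multiply]
    simp [Matrix.mul_nonsing_inv _ hdet1, Matrix.mul_nonsing_inv _ hdet3,
      Matrix.fromBlocks_one]
  rw [hDinv, Matrix.fromBlocks_transpose, Matrix.fromBlocks_multiply,
    Matrix.fromBlocks_multiply] at hcomm
  simp only [Matrix.transpose_zero, Matrix.zero_mul, Matrix.mul_zero, add_zero, zero_add] at hcomm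
  obtain ⟨e11, e12, e21, e22⟩ := Matrix.fromBlocks_inj.mp hcomm
  refine ⟨?_, e11, e22⟩
  -- from e12 : (Λ₁⁻¹)ᵀ * G = G * Λ₃⁻¹ derive Λ₁ᵀ * G = G * Λ₃
  have key : Λ₁ᵀ * G = G * Λ₃ := by
    have h1 : Λ₁ᵀ * (Λ₁⁻¹)ᵀ = 1 := by
      rw [← Matrix.transpose_mul, Matrix.nonsing_inv_mul _ hdet1, Matrix.transpose_one]
    have h3 : Λ₃⁻¹ * Λ₃ = 1 := Matrix.nonsing_inv_mul _ hdet3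
    calc Λ₁ᵀ * G = Λ₁ᵀ * (G * Λ₃⁻¹) * Λ₃ := by
          rw [Matrix.mul_assoc (Λ₁ᵀ), Matrix.mul_assoc, h3, Matrix.mul_one]
      _ = Λ₁ᵀ * ((Λ₁⁻¹)ᵀ * G) * Λ₃ := by rw [e12]
      _ = G * Λ₃ := by rw [← Matrix.mul_assoc, h1, Matrix.one_mul]
  -- map to ℂ
  have hmap : (Λ₁.map Complex.ofReal)ᵀ * (G.map Complex.ofReal)
      = (G.map Complex.ofReal) * (Λ₃.map Complex.ofReal) := by
    have := congrArg (fun M => M.map (Complex.ofRealHom : ℝ →+* ℂ)) key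
    simp [Matrix.map_mul, Matrix.transpose_map] at this
    exact this
  have hG0 : G.map Complex.ofReal = 0 := by
    apply sylvester_aux _ _ _ _ hmap
    intro μ h0 h1
    apply hdisj
    refine ⟨μ, ?_, ?_⟩
    · have : (Λ₁.map Complex.ofReal - μ • 1)ᵀ.det = 0 := by
        rw [Matrix.transpose_sub, Matrix.transpose_smul, Matrix.transpose_one]
        exact h1
      rwa [Matrix.det_transpose] at this
    · have hneg : (μ • (1 : Matrix (Fin m) (Fin m) ℂ) - Λ₃.map Complex.ofReal)
          = -(Λ₃.map Complex.ofReal - μ • 1) := by rw [neg_sub]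
      rw [hneg, Matrix.det_neg] at h0
      rcases mul_eq_zero.mp h0 with h | h
      · exact absurd h (pow_ne_zero _ (by norm_num))
      · exact h
  ext i j
  have := congrFun (congrFun hG0 i) j
  simpa [Complex.ofReal_eq_zero] using this
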